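/- Let 𝒞 be a variety of L-algebras and suppose {W_i, w_ij : 1 ≤ i, j ≤ m} is an equational array in 𝒞 of size m and signature (n₁,…,n_m). Let A ∈ 𝒞 and let B be a subalgebra of A. Suppose that for a particular choice of elements x_{ij} ∈ A one has w_ii(x_{i1},…,x_{in_i}) ∈ B for all 1 ≤ i ≤ m. Then W₁(w₁₁(x₁),…,w₁ₘ(xₘ)) lies in dom_A^𝒞(B), where x_j denotes the tuple (x_{j1},…,x_{jn_j}). -/

import Mathlib

open FirstOrder Language

universe u v w x

open Classical in
/-- Transferability of a set of variables. -/
def Transferable {L : FirstOrder.Language.{u, v}} (T : L.Theory) {A : Type w} [L.Structure A]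
    (B : L.Substructure A) {S : Type x} (W : L.Term S) (xs : S → A) (t : Set S) : Prop :=
  ∀ S₁ S₂ : Set S, Disjoint S₁ t → Disjoint S₁ S₂ → Disjoint t S₂ →
    S₁ ∪ t ∪ S₂ = Set.univ →
    ∀ (C : Type (max u v w)) [L.Structure C] [T.Model C], ∀ f g : A →[L] C,
      (∀ b ∈ B, f b = g b) →
      Term.realize (fun s => if s ∈ S₁ ∪ t then f (xs s) else g (xs s)) W =
      Term.realize (fun s => if s ∈ S₁ then f (xs s) else g (xs s)) W

/-- The dominion of a subalgebra `B` of `A` in the variety of models of `T`. -/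
def Dominion {L : FirstOrder.Language.{u, v}} (T : L.Theory) {A : Type w} [L.Structure A]
    (B : L.Substructure A) : Set A :=
  {a : A | ∀ (C : Type (max u v w)) [L.Structure C] [T.Model C], ∀ f g : A →[L] C,
    (∀ b ∈ B, f b = g b) → f a = g a}

/-- A family `{W i, w i j : i, j < m}`, where each `W i` is a term in `m` variables
and each `w i j` is a term in `n j` variables, is an *equational array* in the variety
of models of `T`, of size `m` and signature `(n 0, …, n (m-1))`, if the value of
`W i (w i 0 (x 0), …, w i (m-1) (x (m-1)))` is the same for all `i`, in every algebra
of the variety and for all values of the indeterminates. -/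
def IsEquationalArray {L : FirstOrder.Language.{u, v}} (T : L.Theory) (m : ℕ)
    (n : Fin m → ℕ) (W : Fin m → L.Term (Fin m))
    (w : Fin m → (j : Fin m) → L.Term (Fin (n j))) : Prop :=
  ∀ (C : Type (max u v)) [L.Structure C] [T.Model C],
    ∀ (x : (j : Fin m) → Fin (n j) → C) (i i' : Fin m),
      (W i).realize (fun j => (w i j).realize (x j)) =
      (W i').realize (fun j => (w i' j).realize (x j))

/-- An equational array identity holds in every model of `T`, in any universe. -/
theorem IsEquationalArray.realize_eq {L : FirstOrder.Language.{u, v}} {T : L.Theory}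
    {m : ℕ} {n : Fin m → ℕ} {W : Fin m → L.Term (Fin m)}
    {w : Fin m → (j : Fin m) → L.Term (Fin (n j))}
    (harr : IsEquationalArray T m n W w)
    (C : Type*) [L.Structure C] [T.Model C] [Nonempty C]
    (x : (j : Fin m) → Fin (n j) → C) (i i' : Fin m) :
    (W i).realize (fun j => (w i j).realize (x j)) =
      (W i').realize (fun j => (w i' j).realize (x j)) := by
  classical
  let U : Fin m → L.Term ((j : Fin m) × Fin (n j)) :=
    fun i => (W i).subst fun j => (w i j).relabel fun k => ⟨j, k⟩
  have hmodels : T ⊨ᵇ Term.equal (U i) (U i') := by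
    rw [Theory.models_formula_iff]
    intro M vv
    simp only [U, Formula.realize_equal, Term.realize_subst, Term.realize_relabel]
    exact harr M (fun j k => vv ⟨j, k⟩) i i'
  have h := hmodels.realize_formula C (v := fun p => x p.1 p.2)
  simpa only [U, Formula.realize_equal, Term.realize_subst, Term.realize_relabel,
    Function.comp, Function.comp_def] using h

/-- If `{W i, w i j}` is an equational array in the variety, `A` an algebra of the
variety, `B` a subalgebra of `A`, and `x` is a choice of elements of `A` with
`w i i (x i) ∈ B` for all `i`, then `W 0 (w 0 0 (x 0), …, w 0 (m-1) (x (m-1)))` lies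
in the dominion of `B` in `A`. -/
theorem equationalArray_realize_mem_dominion {L : FirstOrder.Language.{u, v}}
    (T : L.Theory) {A : Type w} [L.Structure A] [T.Model A] (B : L.Substructure A)
    (m : ℕ) (hm : 0 < m) (n : Fin m → ℕ) (W : Fin m → L.Term (Fin m))
    (w : Fin m → (j : Fin m) → L.Term (Fin (n j)))
    (harr : IsEquationalArray T m n W w)
    (x : (j : Fin m) → Fin (n j) → A)
    (hB : ∀ i : Fin m, (w i i).realize (x i) ∈ B) :
    (W ⟨0, hm⟩).realize (fun j => (w ⟨0, hm⟩ j).realize (x j)) ∈ Dominion T B := by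
  classical
  intro C _ _ f g hfg
  set a : A := (W ⟨0, hm⟩).realize (fun j => (w ⟨0, hm⟩ j).realize (x j)) with ha
  have : Nonempty C := ⟨f a⟩
  -- mixed valuations: first `k` blocks use `g`, the rest use `f`
  set val : ℕ → (j : Fin m) → Fin (n j) → C :=
    fun k j i => if (j : ℕ) < k then g (x j i) else f (x j i) with hval
  -- flipping block `k` from `f` to `g` while at term `W k` is harmless
  have flip : ∀ k (hk : k < m),
      (fun j => (w ⟨k, hk⟩ j).realize (val k j)) =
      (fun j => (w ⟨k, hk⟩ j).realize (val (k + 1) j)) := by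
    intro k hk
    funext j
    by_cases hj : (j : ℕ) = k
    · have hjk : (⟨k, hk⟩ : Fin m) = j := (Fin.ext hj).symm
      have h1 : val k j = f ∘ x j := by
        funext i; simp [hval, hj]
      have h2 : val (k + 1) j = g ∘ x j := by
        funext i; simp [hval, hj]
      rw [h1, h2, HomClass.realize_term f, HomClass.realize_term g, hjk]
      exact hfg _ (hB j)
    · have hlt : ((j : ℕ) < k) ↔ ((j : ℕ) < k + 1) := by omega
      have : val k j = val (k + 1) j := by
        funext i; simp only [hval]; rw [if_congr hlt rfl rfl]
      rw [this]
  have key : ∀ k (hk : k < m),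
      f a = (W ⟨k, hk⟩).realize (fun j => (w ⟨k, hk⟩ j).realize (val k j)) := by
    intro k
    induction k with
    | zero =>
      intro hk
      have h0 : ∀ j, val 0 j = f ∘ x j := by
        intro j; funext i; simp [hval]
      have h1 : (fun j => (w ⟨0, hk⟩ j).realize (val 0 j)) =
          f ∘ fun j => (w ⟨0, hk⟩ j).realize (x j) := by
        funext j
        rw [h0 j, HomClass.realize_term f]
        rfl
      rw [ha, h1, HomClass.realize_term f]
    | succ k ih =>
      intro hk1
      have hk : k < m := Nat.lt_of_succ_lt hk1
      rw [ih hk, flip k hk]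
      exact harr.realize_eq C (val (k + 1)) ⟨k, hk⟩ ⟨k + 1, hk1⟩
  have hm1 : m - 1 < m := Nat.sub_lt hm Nat.one_pos
  have hvalm : ∀ j, val m j = g ∘ x j := by
    intro j; funext i; simp [hval, j.isLt]
  calc f a = (W ⟨m - 1, hm1⟩).realize
        (fun j => (w ⟨m - 1, hm1⟩ j).realize (val (m - 1) j)) := key (m - 1) hm1
    _ = (W ⟨m - 1, hm1⟩).realize
        (fun j => (w ⟨m - 1, hm1⟩ j).realize (val (m - 1 + 1) j)) := by rw [flip (m - 1) hm1]
    _ = (W ⟨0, hm⟩).realize (fun j => (w ⟨0, hm⟩ j).realize (val m j)) := by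
        have hm' : m - 1 + 1 = m := Nat.succ_pred_eq_of_pos hm
        rw [show (m - 1 + 1) = m from hm']
        exact harr.realize_eq C (val m) ⟨m - 1, hm1⟩ ⟨0, hm⟩
    _ = g a := by
        have h1 : (fun j => (w ⟨0, hm⟩ j).realize (val m j)) =
            g ∘ fun j => (w ⟨0, hm⟩ j).realize (x j) := by
          funext j
          show (w ⟨0, hm⟩ j).realize (val m j) = g ((w ⟨0, hm⟩ j).realize (x j))
          rw [hvalm j, HomClass.realize_term g]
        rw [h1, HomClass.realize_term g]
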